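/- arXiv:2006.10851 — 3 statements merged into one kernel-verified Lean document; each statement's English description precedes it below -/
import Mathlib

section
/- Let C be a category with a functor F : C ⥤ D, and let π : Tw(C) ⥤ C be the source projection of the twisted arrow category. If the colimit of F exists, then the colimit of π ⋙ F exists, and the canonical morphism colim(π ⋙ F) ⟶ colim(F) induced by restricting the colimit cocone of F along π is an isomorphism. -/
/-!
For any category `C`, the source projection `π : Tw(C) ⥤ C` from the twisted arrow
category, sending a twisted arrow `(f : i ⟶ j)` to its source `i`, restricts colimits along
itself to isomorphic colimits.

Here `Tw(C)` has as objects the morphisms `f : i ⟶ j` of `C`, and a morphism between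
the twisted arrows `(f : i ⟶ j)` and `(f' : i' ⟶ j')` is a twisted commutative square,
consisting of morphisms `g : i ⟶ i'` and `h : j' ⟶ j` with `f = h ∘ f' ∘ g`.
-/

universe v u v₂ u₂

open CategoryTheory

/-- The twisted arrow category of `C`: objects are the morphisms of `C`. -/
structure TwistedArrow (C : Type u) [Category.{v} C] : Type max u v where
  {left : C}
  {right : C}
  hom : left ⟶ right

namespace TwistedArrow

variable {C : Type u} [Category.{v} C]

/-- A morphism of twisted arrows: a twisted commutative square. -/
@[ext]
structure Hom (f g : TwistedArrow C) : Type v where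
  left : f.left ⟶ g.left
  right : g.right ⟶ f.right
  w : f.hom = left ≫ g.hom ≫ right := by aesop_cat

instance : Category.{v} (TwistedArrow C) where
  Hom f g := Hom f g
  id f := { left := 𝟙 f.left, right := 𝟙 f.right }
  comp u v :=
    { left := u.left ≫ v.left
      right := v.right ≫ u.right
      w := by rw [u.w, v.w]; simp }

@[simp] theorem id_left (f : TwistedArrow C) : Hom.left (𝟙 f) = 𝟙 f.left := rfl
@[simp] theorem id_right (f : TwistedArrow C) : Hom.right (𝟙 f) = 𝟙 f.right := rfl
@[simp] theorem comp_left {f g h : TwistedArrow C} (u : f ⟶ g) (v : g ⟶ h) :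
    Hom.left (u ≫ v) = u.left ≫ v.left := rfl
@[simp] theorem comp_right {f g h : TwistedArrow C} (u : f ⟶ g) (v : g ⟶ h) :
    Hom.right (u ≫ v) = v.right ≫ u.right := rfl

/-- The source projection `Tw(C) ⥤ C`, sending a twisted arrow to its source. -/
@[simps]
def proj (C : Type u) [Category.{v} C] : TwistedArrow C ⥤ C where
  obj f := f.left
  map u := u.left

end TwistedArrow

open CategoryTheory.Limits

instance twistedArrow_proj_final {C : Type u} [Category.{v} C] :
    (TwistedArrow.proj C).Final := by
  constructor
  intro c
  have : Nonempty (CategoryTheory.StructuredArrow c (TwistedArrow.proj C)) :=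
    ⟨CategoryTheory.StructuredArrow.mk (Y := TwistedArrow.mk (𝟙 c)) (𝟙 c)⟩
  apply zigzag_isConnected
  intro j1 j2
  -- connect any object to the base object `(𝟙 c, 𝟙 c)`
  have key : ∀ (j : CategoryTheory.StructuredArrow c (TwistedArrow.proj C)),
      Zigzag j (CategoryTheory.StructuredArrow.mk (Y := TwistedArrow.mk (𝟙 c)) (𝟙 c)) := by
    intro j
    obtain ⟨⟨⟩, f, u⟩ := j
    let mid : CategoryTheory.StructuredArrow c (TwistedArrow.proj C) :=
      CategoryTheory.StructuredArrow.mk (Y := TwistedArrow.mk (u ≫ f.hom)) (𝟙 c)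
    have h1 : Zag (CategoryTheory.StructuredArrow.mk (Y := f) u) mid := by
      right
      exact ⟨CategoryTheory.StructuredArrow.homMk
        (TwistedArrow.Hom.mk u (𝟙 _) (by simp [mid]; rfl)) (by simp [mid]; exact Category.id_comp u)⟩
    have h2 : Zag mid (CategoryTheory.StructuredArrow.mk (Y := TwistedArrow.mk (𝟙 c)) (𝟙 c)) := by
      left
      exact ⟨CategoryTheory.StructuredArrow.homMk
        (TwistedArrow.Hom.mk (𝟙 c) (u ≫ f.hom) (by simp [mid]; exact (by simp : u ≫ f.hom = 𝟙 c ≫ 𝟙 c ≫ u ≫ f.hom))) (by simp [mid]; exact Category.comp_id _)⟩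
    exact Relation.ReflTransGen.tail (Relation.ReflTransGen.single h1) h2
  exact (key j1).trans (zigzag_symmetric.symm _ _ (key j2))

/-- If the colimit of `F : C ⥤ D` exists, then the colimit of `π ⋙ F` exists, where
`π : Tw(C) ⥤ C` is the source projection of the twisted arrow category, and the
canonical morphism `colim (π ⋙ F) ⟶ colim F`, induced by restricting the colimit
cocone of `F` along `π`, is an isomorphism. -/
theorem hasColimit_twistedArrow_proj_comp_and_isIso_pre
    {C : Type u} [Category.{v} C] {D : Type u₂} [Category.{v₂} D]
    (F : C ⥤ D) [HasColimit F] :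
    HasColimit (TwistedArrow.proj C ⋙ F) ∧
      ∀ [HasColimit (TwistedArrow.proj C ⋙ F)],
        IsIso (colimit.pre F (TwistedArrow.proj C)) := by
  refine ⟨Functor.Final.comp_hasColimit _, ?_⟩
  intro h
  infer_instance
end

section
/- Let C be a category with a functor F : C ⥤ D, and let π : Tw(C) ⥤ C be the source projection of the twisted arrow category. If the limit of F exists, then the limit of π ⋙ F exists, and the canonical morphism lim(F) ⟶ lim(π ⋙ F) induced by restricting the limit cone of F along π is an isomorphism. -/
/-!
For any category `C`, the source projection `π : Tw(C) ⥤ C` from the twisted arrow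
category, sending a twisted arrow `(f : i ⟶ j)` to its source `i`, restricts limits along
itself to isomorphic colimits.

Here `Tw(C)` has as objects the morphisms `f : i ⟶ j` of `C`, and a morphism between
the twisted arrows `(f : i ⟶ j)` and `(f' : i' ⟶ j')` is a twisted commutative square,
consisting of morphisms `g : i ⟶ i'` and `h : j' ⟶ j` with `f = h ∘ f' ∘ g`.
-/

universe v u v₂ u₂

open CategoryTheory

namespace TwistedArrow

variable {C : Type u} [Category.{v} C]

open CategoryTheory.Limits

/-- Helper packaging a twisted arrow with a map from its source as a costructured arrow. -/

@[reducible] def costr {c : C} (f : TwistedArrow C) (u : f.left ⟶ c) :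
    CostructuredArrow (proj C) c :=
  CostructuredArrow.mk (S := proj C) u

instance initial_proj : (proj C).Initial := by
  constructor
  intro c
  have : Nonempty (CostructuredArrow (proj C) c) :=
    ⟨costr (TwistedArrow.mk (𝟙 c)) (𝟙 c)⟩
  apply zigzag_isConnected
  intro A B
  -- connect any A = (f : i ⟶ j, u : i ⟶ c) to the canonical object (𝟙 c, 𝟙 c)
  have key : ∀ A : CostructuredArrow (proj C) c,
      Zigzag A (costr (TwistedArrow.mk (𝟙 c)) (𝟙 c)) := by
    intro A
    obtain ⟨f, ⟨⟨⟩⟩, u⟩ := A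
    -- A = (f : i ⟶ j, u : i ⟶ c)
    -- step 1: A ⟶ (𝟙 i, u)
    have h1 : Zag (costr f u)
        (costr (TwistedArrow.mk (𝟙 f.left)) u) := by
      left
      exact ⟨CostructuredArrow.homMk
        (⟨𝟙 f.left, f.hom, by simp⟩ : f ⟶ TwistedArrow.mk (𝟙 f.left)) (Category.id_comp _)⟩
    -- step 2: (u : i ⟶ c, u) ⟶ (𝟙 i, u)
    have h2 : Zag (costr (TwistedArrow.mk (𝟙 f.left)) u)
        (costr (TwistedArrow.mk u) u) := by
      right
      exact ⟨CostructuredArrow.homMk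
        (⟨𝟙 f.left, u, by erw [Category.id_comp, Category.id_comp]⟩ : TwistedArrow.mk u ⟶ TwistedArrow.mk (𝟙 f.left)) (Category.id_comp _)⟩
    -- step 3: (u, u) ⟶ (𝟙 c, 𝟙 c)
    have h3 : Zag (costr (TwistedArrow.mk u) u)
        (costr (TwistedArrow.mk (𝟙 c)) (𝟙 c)) := by
      left
      exact ⟨CostructuredArrow.homMk
        (⟨u, 𝟙 c, by simp⟩ : TwistedArrow.mk u ⟶ TwistedArrow.mk (𝟙 c)) (Category.comp_id _)⟩
    exact (Relation.ReflTransGen.single h1).tail h2 |>.tail h3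
  exact (key A).trans (zigzag_symmetric.symm _ _ (key B))

end TwistedArrow

open CategoryTheory.Limits

/-- If the limit of `F : C ⥤ D` exists, then the limit of `π ⋙ F` exists, where
`π : Tw(C) ⥤ C` is the source projection of the twisted arrow category, and the
canonical morphism `lim F ⟶ lim (π ⋙ F)`, induced by restricting the limit cone of
`F` along `π`, is an isomorphism. -/
theorem hasLimit_twistedArrow_proj_comp_and_isIso_pre
    {C : Type u} [Category.{v} C] {D : Type u₂} [Category.{v₂} D]
    (F : C ⥤ D) [HasLimit F] :
    HasLimit (TwistedArrow.proj C ⋙ F) ∧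
      ∀ [HasLimit (TwistedArrow.proj C ⋙ F)],
        IsIso (limit.pre F (TwistedArrow.proj C)) := by
  exact ⟨inferInstance, fun {_} => inferInstance⟩
end

section
/- Let C be a small category possessing an initial object. The localization of C at the class of all morphisms of C is equivalent to the terminal category (the category with one object and only the identity morphism). -/
/-!
If a small category `C` has an initial object, then the localization of `C` at the
class of all morphisms of `C` is equivalent to the terminal category.
-/

universe u v₂ u₂

open CategoryTheory CategoryTheory.Limits

/-- If `C` is a small category with an initial object, then any localization of `C` at
the class of all morphisms of `C` is equivalent to the terminal category (the category
with one object and only the identity morphism). -/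
theorem localization_at_top_equiv_terminal_of_hasInitial
    (C : Type u) [SmallCategory C] [HasInitial C]
    {D : Type u₂} [Category.{v₂} D] (L : C ⥤ D)
    [L.IsLocalization (⊤ : MorphismProperty C)] :
    Nonempty (D ≌ Discrete PUnit.{1}) := by
  let W : MorphismProperty C := ⊤
  letI : Localization.Lifting L W ((Functor.const C).obj (L.obj (⊥_ C)))
      ((Functor.const D).obj (L.obj (⊥_ C))) :=
    ⟨NatIso.ofComponents (fun _ => Iso.refl _) (by aesop_cat)⟩
  -- the natural transformation `const ⊥ ⟶ 𝟭 C`, whiskered with `L`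
  let τ : (Functor.const C).obj (L.obj (⊥_ C)) ⟶ L :=
    { app := fun X => L.map (initial.to X)
      naturality := fun X Y f => by
        dsimp
        rw [Category.id_comp, ← L.map_comp, initial.to_comp] }
  -- lift it to a natural transformation `const (L ⊥) ⟶ 𝟭 D`
  let β : (Functor.const D).obj (L.obj (⊥_ C)) ⟶ 𝟭 D :=
    Localization.liftNatTrans L W _ _ _ _ τ
  have hβnat : ∀ {X Y : D} (f : X ⟶ Y), β.app Y = β.app X ≫ f := by
    intro X Y f
    have := β.naturality f
    simp only [Functor.const_obj_map, Category.id_comp, Functor.id_map, Category.id_comp] at this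
    exact (Category.id_comp _).symm.trans this
  have hβL : ∀ (c : C), IsIso (β.app (L.obj c)) := by
    intro c
    have : β.app (L.obj c) =
        (Localization.Lifting.iso L W ((Functor.const C).obj (L.obj (⊥_ C)))
          ((Functor.const D).obj (L.obj (⊥_ C)))).hom.app c ≫ τ.app c ≫
          (Localization.Lifting.iso L W L (𝟭 D)).inv.app c :=
      Localization.liftNatTrans_app L W _ _ _ _ τ c
    rw [this]
    have : IsIso (τ.app c) := Localization.inverts L W _ (by trivial)
    infer_instance
  have hβ : ∀ (X : D), IsIso (β.app X) := by
    intro X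
    haveI := Localization.essSurj L W
    have e : L.obj (L.objPreimage X) ≅ X := L.objObjPreimageIso X
    have := hβL (L.objPreimage X)
    rw [hβnat e.hom]
    infer_instance
  haveI : ∀ (X Y : D), Subsingleton (X ⟶ Y) := by
    intro X Y
    constructor
    intro f g
    have := hβ X
    have h1 : β.app X ≫ f = β.app X ≫ g := by rw [← hβnat f, ← hβnat g]
    exact (cancel_epi (β.app X)).1 h1
  refine ⟨CategoryTheory.Equivalence.mk (Functor.star D)
    ((Functor.const _).obj (L.obj (⊥_ C))) ?_ ?_⟩
  · exact NatIso.ofComponents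
      (fun X => by
        have := hβ X
        exact (asIso (β.app X)).symm)
      (fun _ => Subsingleton.elim _ _)
  · exact NatIso.ofComponents (fun ⟨⟨⟩⟩ => Iso.refl _) (by aesop_cat)
end
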